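/- Let n ≥ 2 and let 𝒜 = {A_1,…,A_K} be a finite collection of n×n matrices over 𝔽 (𝔽 = ℝ or ℂ) having no common nontrivial invariant subspace. Then for every fixed nonzero matrix Z of rank strictly less than n, the cost functional f_𝒜(Q) tends to infinity as Q tends to Z with Q ranging over invertible matrices; i.e., for every sequence (Q_j) of invertible matrices with Q_j → Z one has f_𝒜(Q_j) → ∞. -/

import Mathlib

open Filter Topology Matrix

/-- The joint-diagonalization cost functional
`f_𝒜(Q) = (1/2) ∑ₖ ∑_{i≠j} |(Q⁻¹ Aₖ Q)_{ij}|²`. -/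
noncomputable def costF {𝕜 : Type*} [RCLike 𝕜] {n K : ℕ}
    (A : Fin K → Matrix (Fin n) (Fin n) 𝕜) (Q : Matrix (Fin n) (Fin n) 𝕜) : ℝ :=
  (1 / 2) * ∑ k, ∑ i, ∑ j, if i ≠ j then ‖(Q⁻¹ * A k * Q) i j‖ ^ 2 else 0

lemma costF_offdiag_sq_le {𝕜 : Type*} [RCLike 𝕜] {n K : ℕ}
    (A : Fin K → Matrix (Fin n) (Fin n) 𝕜) (Q : Matrix (Fin n) (Fin n) 𝕜)
    (k : Fin K) (i l : Fin n) (h : i ≠ l) :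
    ‖(Q⁻¹ * A k * Q) i l‖ ^ 2 ≤ 2 * costF A Q := by
  have hterm : ∀ (k' : Fin K) (i' j' : Fin n),
      (0:ℝ) ≤ if i' ≠ j' then ‖(Q⁻¹ * A k' * Q) i' j'‖ ^ 2 else 0 := by
    intro k' i' j'
    split <;> positivity
  have h1 : ‖(Q⁻¹ * A k * Q) i l‖ ^ 2
      ≤ ∑ j, if i ≠ j then ‖(Q⁻¹ * A k * Q) i j‖ ^ 2 else 0 := by
    have := Finset.single_le_sum (f := fun j => if i ≠ j then ‖(Q⁻¹ * A k * Q) i j‖ ^ 2 else 0)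
      (fun j _ => hterm k i j) (Finset.mem_univ l)
    simpa [h] using this
  have h2 : (∑ j, if i ≠ j then ‖(Q⁻¹ * A k * Q) i j‖ ^ 2 else 0)
      ≤ ∑ i', ∑ j, if i' ≠ j then ‖(Q⁻¹ * A k * Q) i' j‖ ^ 2 else 0 :=
    Finset.single_le_sum
      (f := fun i' => ∑ j, if i' ≠ j then ‖(Q⁻¹ * A k * Q) i' j‖ ^ 2 else 0)
      (fun i' _ => Finset.sum_nonneg fun j _ => hterm k i' j) (Finset.mem_univ i)
  have h3 : (∑ i', ∑ j, if i' ≠ j then ‖(Q⁻¹ * A k * Q) i' j‖ ^ 2 else 0)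
      ≤ ∑ k', ∑ i', ∑ j, if i' ≠ j then ‖(Q⁻¹ * A k' * Q) i' j‖ ^ 2 else 0 :=
    Finset.single_le_sum
      (f := fun k' => ∑ i', ∑ j, if i' ≠ j then ‖(Q⁻¹ * A k' * Q) i' j‖ ^ 2 else 0)
      (fun k' _ => Finset.sum_nonneg fun i' _ => Finset.sum_nonneg fun j _ => hterm k' i' j)
      (Finset.mem_univ k)
  unfold costF
  linarith

theorem costF_tendsto_atTop_of_no_common_invariant_subspace
    {𝕜 : Type*} [RCLike 𝕜] {n K : ℕ} (hn : 2 ≤ n)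
    (A : Fin K → Matrix (Fin n) (Fin n) 𝕜)
    (hA : ¬ ∃ Y : Submodule 𝕜 (Fin n → 𝕜), Y ≠ ⊥ ∧ Y ≠ ⊤ ∧
      ∀ k, ∀ x ∈ Y, (A k).mulVec x ∈ Y)
    (Z : Matrix (Fin n) (Fin n) 𝕜) (hZ0 : Z ≠ 0) (hZr : Z.rank < n)
    (Q : ℕ → Matrix (Fin n) (Fin n) 𝕜) (hQ : ∀ j, IsUnit (Q j))
    (hQZ : Tendsto Q atTop (𝓝 Z)) :
    Tendsto (fun j => costF A (Q j)) atTop atTop := by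
  by_contra hcon
  rw [tendsto_atTop] at hcon
  push_neg at hcon
  obtain ⟨b, hb⟩ := hcon
  have hb' : ∃ᶠ j in atTop, costF A (Q j) < b := by
    simpa [not_le] using Filter.not_eventually.mp hb
  obtain ⟨φ₀, hφ₀mono, hφ₀⟩ := Filter.extraction_of_frequently_atTop hb'
  haveI : ProperSpace 𝕜 := FiniteDimensional.proper_rclike 𝕜 𝕜
  set R := Real.sqrt (2 * b) with hR
  set g : ℕ → (Fin K → Fin n → Fin n → 𝕜) := fun j k r c =>
    if r = c then 0 else ((Q (φ₀ j))⁻¹ * A k * Q (φ₀ j)) r c with hg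
  have hgmem : ∀ j, g j ∈ Metric.closedBall (0 : Fin K → Fin n → Fin n → 𝕜) R := by
    intro j
    rw [mem_closedBall_zero_iff]
    rw [pi_norm_le_iff_of_nonneg (Real.sqrt_nonneg _)]
    intro k
    rw [pi_norm_le_iff_of_nonneg (Real.sqrt_nonneg _)]
    intro r
    rw [pi_norm_le_iff_of_nonneg (Real.sqrt_nonneg _)]
    intro c
    by_cases hrc : r = c
    · simp [hg, hrc, Real.sqrt_nonneg]
    · simp only [hg, if_neg hrc]
      have h1 := costF_offdiag_sq_le A (Q (φ₀ j)) k r c hrc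
      have h2 := hφ₀ j
      exact Real.le_sqrt_of_sq_le (by linarith)
  obtain ⟨O, -, φ₁, hφ₁mono, hO⟩ :=
    tendsto_subseq_of_bounded Metric.isBounded_closedBall hgmem
  set ψ : ℕ → ℕ := φ₀ ∘ φ₁ with hψdef
  have hψmono : StrictMono ψ := hφ₀mono.comp hφ₁mono
  set p : ℕ → Matrix (Fin n) (Fin n) 𝕜 := fun j => Q (ψ j) with hp
  have hpZ : Tendsto p atTop (𝓝 Z) := hQZ.comp hψmono.tendsto_atTop
  have hpZ' : ∀ r c, Tendsto (fun j => p j r c) atTop (𝓝 (Z r c)) := by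
    intro r c
    exact (((continuous_apply c).comp (continuous_apply r)).tendsto Z).comp hpZ
  have hOent : ∀ k r c, Tendsto (fun j => g (φ₁ j) k r c) atTop (𝓝 (O k r c)) := by
    intro k r c
    have := hO
    rw [tendsto_pi_nhds] at this
    have := this k
    rw [tendsto_pi_nhds] at this
    have := this r
    rw [tendsto_pi_nhds] at this
    exact this c
  set Y : Submodule 𝕜 (Fin n → 𝕜) := LinearMap.range Z.mulVecLin with hY
  have hcolY : ∀ v : Fin n → 𝕜, Z.mulVec v ∈ Y := fun v => ⟨v, rfl⟩
  -- main claim: each column of `A k * Z` lies in `Y`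
  have key : ∀ (k : Fin K) (i : Fin n), (fun r => (A k * Z) r i) ∈ Y := by
    intro k i
    set B : ℕ → Matrix (Fin n) (Fin n) 𝕜 := fun j => (p j)⁻¹ * A k * p j with hB
    have hpB : ∀ j, p j * B j = A k * p j := by
      intro j
      have hu : p j * (p j)⁻¹ = 1 :=
        Matrix.mul_nonsing_inv _ ((Matrix.isUnit_iff_isUnit_det _).mp (hQ (ψ j)))
      calc p j * ((p j)⁻¹ * A k * p j) = (p j * (p j)⁻¹) * A k * p j := by
            simp only [Matrix.mul_assoc]
        _ = A k * p j := by rw [hu, Matrix.one_mul]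
    set d : ℕ → 𝕜 := fun j => B j i i with hd
    set oc : ℕ → Fin n → 𝕜 := fun j r => g (φ₁ j) k r i with hoc
    set o : Fin n → 𝕜 := fun r => O k r i with ho
    have hocB : ∀ j r, oc j r = if r = i then 0 else B j r i := fun j r => rfl
    have hocT : Tendsto oc atTop (𝓝 o) := by
      rw [tendsto_pi_nhds]
      intro r
      exact hOent k r i
    have hcolB : ∀ j, (fun r => B j r i) = oc j + d j • (Pi.single i (1:𝕜) : Fin n → 𝕜) := by
      intro j
      funext r
      by_cases hr : r = i
      · subst hr
        simp [hocB, hd]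
      · simp [hocB, hr, Pi.single_apply]
    have hMV : ∀ j, (fun r => (A k * p j) r i)
        = (p j).mulVec (oc j) + d j • (fun r => p j r i) := by
      intro j
      have h1 : (fun r => (A k * p j) r i) = (p j).mulVec (fun r => B j r i) := by
        funext r
        rw [← hpB j]
        simp [Matrix.mul_apply, Matrix.mulVec, dotProduct]
      rw [h1, hcolB j, Matrix.mulVec_add, Matrix.mulVec_smul, Matrix.mulVec_single]
      simp [mul_one]
      rfl
    have hAp : Tendsto (fun j => fun r => (A k * p j) r i) atTop
        (𝓝 (fun r => (A k * Z) r i)) := by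
      rw [tendsto_pi_nhds]
      intro r
      simp only [Matrix.mul_apply]
      exact tendsto_finset_sum _ fun s _ => (tendsto_const_nhds).mul (hpZ' s i)
    have hmvoc : Tendsto (fun j => (p j).mulVec (oc j)) atTop (𝓝 (Z.mulVec o)) := by
      rw [tendsto_pi_nhds]
      intro r
      simp only [Matrix.mulVec, dotProduct]
      refine tendsto_finset_sum _ fun s _ => (hpZ' r s).mul ?_
      have := hocT
      rw [tendsto_pi_nhds] at this
      exact this s
    set w : Fin n → 𝕜 := (fun r => (A k * Z) r i) - Z.mulVec o with hw
    have hW : Tendsto (fun j => d j • (fun r => p j r i)) atTop (𝓝 w) := by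
      have h1 := hAp.sub hmvoc
      refine h1.congr fun j => ?_
      rw [hMV j]
      abel
    have hcolp : Tendsto (fun j => fun r => p j r i) atTop (𝓝 (fun r => Z r i)) := by
      rw [tendsto_pi_nhds]
      intro r
      exact hpZ' r i
    by_cases hdiv : Tendsto (fun j => ‖d j‖) atTop atTop
    · -- diagonal entry blows up: the i-th column of Z is zero
      have hne : ∀ᶠ j in atTop, d j ≠ 0 := by
        filter_upwards [hdiv.eventually_ge_atTop 1] with j hj
        intro h0
        rw [h0, norm_zero] at hj
        linarith
      have hdinv : Tendsto (fun j => (d j)⁻¹) atTop (𝓝 0) := by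
        rw [tendsto_zero_iff_norm_tendsto_zero]
        simpa [norm_inv, Pi.inv_def] using hdiv.inv_tendsto_atTop
      have h0 : Tendsto (fun j => (d j)⁻¹ • (d j • (fun r => p j r i))) atTop
          (𝓝 ((0:𝕜) • w)) := hdinv.smul hW
      rw [zero_smul] at h0
      have hcolp0 : Tendsto (fun j => fun r => p j r i) atTop (𝓝 0) := by
        refine h0.congr' ?_
        filter_upwards [hne] with j hj
        rw [inv_smul_smul₀ hj]
      have hz : (fun r => Z r i) = 0 := tendsto_nhds_unique hcolp hcolp0
      have hAZ0 : (fun r => (A k * Z) r i) = 0 := by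
        funext r
        simp only [Matrix.mul_apply]
        have : ∀ s, Z s i = 0 := fun s => congrFun hz s
        simp [this]
      rw [hAZ0]
      exact Y.zero_mem
    · -- diagonal entry has a bounded subsequence
      rw [tendsto_atTop] at hdiv
      push_neg at hdiv
      obtain ⟨M, hM⟩ := hdiv
      have hM' : ∃ᶠ j in atTop, ‖d j‖ < M := by
        simpa [not_le] using Filter.not_eventually.mp hM
      obtain ⟨φ₂, hφ₂mono, hφ₂⟩ := Filter.extraction_of_frequently_atTop hM'
      have hmem : ∀ j, d (φ₂ j) ∈ Metric.closedBall (0:𝕜) M := by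
        intro j
        rw [mem_closedBall_zero_iff]
        exact (hφ₂ j).le
      obtain ⟨δ, -, φ₃, hφ₃mono, hδ⟩ :=
        tendsto_subseq_of_bounded Metric.isBounded_closedBall hmem
      set χ : ℕ → ℕ := φ₂ ∘ φ₃ with hχ
      have hχmono : StrictMono χ := hφ₂mono.comp hφ₃mono
      have h1 : Tendsto (fun j => d (χ j) • (fun r => p (χ j) r i)) atTop (𝓝 w) :=
        hW.comp hχmono.tendsto_atTop
      have h2 : Tendsto (fun j => d (χ j) • (fun r => p (χ j) r i)) atTop
          (𝓝 (δ • fun r => Z r i)) :=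
        Tendsto.smul hδ (hcolp.comp hχmono.tendsto_atTop)
      have hwval : w = δ • fun r => Z r i := tendsto_nhds_unique h1 h2
      have hwmem : w ∈ Y := by
        rw [hwval]
        refine Y.smul_mem δ ?_
        have : (fun r => Z r i) = Z.mulVec (Pi.single i 1) := by
          funext r
          simp
        rw [this]
        exact hcolY _
      have : (fun r => (A k * Z) r i) = w + Z.mulVec o := by
        rw [hw]
        abel
      rw [this]
      exact Y.add_mem hwmem (hcolY o)
  -- Y is a common invariant subspace
  refine hA ⟨Y, ?_, ?_, ?_⟩
  · -- Y ≠ ⊥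
    intro hbot
    have hex : ∃ r c, Z r c ≠ 0 := by
      by_contra h
      push_neg at h
      exact hZ0 (Matrix.ext fun r c => h r c)
    obtain ⟨r, c, hrc⟩ := hex
    have hmem : Z.mulVec (Pi.single c 1) ∈ Y := hcolY _
    rw [hbot, Submodule.mem_bot] at hmem
    have := congrFun hmem r
    simp at this
    exact hrc this
  · -- Y ≠ ⊤
    intro htop
    have : Z.rank = n := by
      rw [Matrix.rank, ← hY, htop, finrank_top]
      simp [Module.finrank_fintype_fun_eq_card]
    omega
  · -- invariance
    intro k x hx
    obtain ⟨v, rfl⟩ := hx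
    have heq : (A k).mulVec (Z.mulVecLin v) = ∑ i, v i • (fun r => (A k * Z) r i) := by
      have h1 : (A k).mulVec (Z.mulVecLin v) = (A k * Z).mulVec v := by
        rw [Matrix.mulVecLin_apply, Matrix.mulVec_mulVec]
      rw [h1]
      funext r
      simp only [Matrix.mulVec, dotProduct, Finset.sum_apply, Pi.smul_apply,
        smul_eq_mul]
      exact Finset.sum_congr rfl fun i _ => mul_comm _ _
    rw [heq]
    exact Submodule.sum_mem _ fun i _ => Y.smul_mem _ (key k i)
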